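/- If p commutes with a, a + p is invertible and ap is quasinilpotent, then b := (a+p)^{-1}(1−p) commutes with a and a − a²b = ap[1 + (a+p)^{-1}(1−p)] is quasinilpotent. -/

import Mathlib

open Filter Finset Topology
open scoped ENNReal NNReal

/-- An element of a complex (Banach) algebra is quasinilpotent if its spectral radius is zero. -/
noncomputable def Quasinilpotent {A : Type*} [Ring A] [Algebra ℂ A] (q : A) : Prop :=
  spectralRadius ℂ q = 0

/-- `a` has a generalized Drazin inverse: some `b` with `ab = ba`, `b = bab`,
and `a - a²b` quasinilpotent. -/
noncomputable def HasGDrazin {A : Type*} [Ring A] [Algebra ℂ A] (a : A) : Prop :=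
  ∃ b : A, a * b = b * a ∧ b = b * a * b ∧ Quasinilpotent (a - a ^ 2 * b)

lemma quasi_mul_of_commute {A : Type*} [NormedRing A] [NormedAlgebra ℂ A] [CompleteSpace A]
    {q x : A} (h : Commute q x) (hq : spectralRadius ℂ q = 0) :
    spectralRadius ℂ (q * x) = 0 := by
  refine le_antisymm ?_ zero_le
  have t1 := spectrum.pow_nnnorm_pow_one_div_tendsto_nhds_spectralRadius (q * x)
  have t2 : Tendsto (fun n : ℕ => (‖q ^ n‖₊ : ℝ≥0∞) ^ (1 / n : ℝ) * (‖x‖₊ : ℝ≥0∞))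
      atTop (𝓝 0) := by
    have t3 := spectrum.pow_nnnorm_pow_one_div_tendsto_nhds_spectralRadius q
    rw [hq] at t3
    simpa using ENNReal.Tendsto.mul_const t3 (Or.inr ENNReal.coe_ne_top)
  refine le_of_tendsto_of_tendsto t1 t2 ?_
  filter_upwards [eventually_ge_atTop 1] with n hn
  have hn0 : (n : ℝ) ≠ 0 := by positivity
  have hb : ‖(q * x) ^ n‖₊ ≤ ‖q ^ n‖₊ * ‖x‖₊ ^ n := by
    rw [h.mul_pow]
    exact (nnnorm_mul_le _ _).trans (mul_le_mul_right (nnnorm_pow_le' x hn) _)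
  calc ((‖(q * x) ^ n‖₊ : ℝ≥0∞)) ^ (1 / n : ℝ)
      ≤ ((‖q ^ n‖₊ * ‖x‖₊ ^ n : ℝ≥0) : ℝ≥0∞) ^ (1 / n : ℝ) :=
        ENNReal.rpow_le_rpow (by exact_mod_cast hb) (by positivity)
    _ = (‖q ^ n‖₊ : ℝ≥0∞) ^ (1 / n : ℝ) * (‖x‖₊ : ℝ≥0∞) := by
        rw [ENNReal.coe_mul, ENNReal.mul_rpow_of_nonneg _ _ (by positivity),
          ENNReal.coe_pow, ← ENNReal.rpow_natCast (‖x‖₊ : ℝ≥0∞) n, ← ENNReal.rpow_mul,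
          mul_one_div, div_self hn0, ENNReal.rpow_one]

theorem stmt5 {A : Type*} [NormedRing A] [NormedAlgebra ℂ A] [CompleteSpace A]
    (a p : A) (hcomm : a * p = p * a) (u : Aˣ) (hu : (u : A) = a + p)
    (hq : Quasinilpotent (a * p)) :
    a * ((↑u⁻¹ : A) * (1 - p)) = ((↑u⁻¹ : A) * (1 - p)) * a ∧
      a - a ^ 2 * ((↑u⁻¹ : A) * (1 - p)) = a * p * (1 + (↑u⁻¹ : A) * (1 - p)) ∧
      Quasinilpotent (a - a ^ 2 * ((↑u⁻¹ : A) * (1 - p))) := by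
  have hap : Commute a p := hcomm
  have hau' : Commute a (↑u : A) := by
    rw [hu]; exact (Commute.refl a).add_right hap
  have hpu' : Commute p (↑u : A) := by
    rw [hu]; exact hap.symm.add_right (Commute.refl p)
  have hau : Commute a (↑u⁻¹ : A) := hau'.units_inv_right
  have hpu : Commute p (↑u⁻¹ : A) := hpu'.units_inv_right
  have ha1p : Commute a (1 - p) := (Commute.one_right a).sub_right hap
  have h1 : Commute a ((↑u⁻¹ : A) * (1 - p)) := hau.mul_right ha1p
  have hinj : Function.Injective (fun x : A => (↑u : A) * x) := fun x y h => by
    have := congrArg (fun z => (↑u⁻¹ : A) * z) h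
    simpa [← mul_assoc, u.inv_mul] using this
  have h2 : a - a ^ 2 * ((↑u⁻¹ : A) * (1 - p)) = a * p * (1 + (↑u⁻¹ : A) * (1 - p)) := by
    apply hinj
    show (↑u : A) * _ = (↑u : A) * _
    have e1 : (↑u : A) * (a ^ 2 * ((↑u⁻¹ : A) * (1 - p))) = a ^ 2 * (1 - p) := by
      have e : a ^ 2 * ((↑u⁻¹ : A) * (1 - p)) = (↑u⁻¹ : A) * (a ^ 2 * (1 - p)) := by
        rw [← mul_assoc, (hau.pow_left 2).eq, mul_assoc]
      rw [e, ← mul_assoc, u.mul_inv, one_mul]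
    have e3 : a * p * ((↑u⁻¹ : A) * (1 - p)) = (↑u⁻¹ : A) * (a * p * (1 - p)) := by
      rw [← mul_assoc, (hau.mul_left hpu).eq, mul_assoc]
    have h1' : p * a = a * p := hcomm.symm
    rw [mul_sub, e1, mul_add (a * p), mul_one, e3, mul_add, ← mul_assoc (↑u : A) (↑u⁻¹ : A), u.mul_inv,
      one_mul, hu]
    have lhs : (a + p) * a - a ^ 2 * (1 - p) = a * p + a ^ 2 * p := by
      rw [add_mul, mul_sub, mul_one, h1', ← sq]; abel
    have rhs : (a + p) * (a * p) + a * p * (1 - p) = a * p + a ^ 2 * p := by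
      rw [add_mul, mul_sub, mul_one, ← mul_assoc p a, h1', ← mul_assoc a a, ← sq]; abel
    rw [lhs, rhs]
  refine ⟨h1.eq, h2, ?_⟩
  rw [h2]
  have hx : Commute (a * p) (1 + (↑u⁻¹ : A) * (1 - p)) := by
    have c1 : Commute (a * p) ((↑u⁻¹ : A)) := hau.mul_left hpu
    have c2 : Commute (a * p) (1 - p) :=
      (Commute.one_right _).sub_right (hap.mul_left (Commute.refl p))
    exact (Commute.one_right _).add_right (c1.mul_right c2)
  exact quasi_mul_of_commute hx hq
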